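/- Suppose μ has full support on X, η is (α,L)-smooth, x ∈ X with μ({x}) = 0, p ∈ (0,1), and for all r with 0 < r ≤ r(x;p) we have η(B(x,r)) - 1/2 ≥ Δ for some Δ > 0. Then η(x) > 1/2. -/

import Mathlib

open MeasureTheory Metric Set

/-- Conditional mean of `η` over a set `S` under `μ`. -/
noncomputable def condMean {X : Type*} [MeasurableSpace X]
    (μ : Measure X) (η : X → ℝ) (S : Set X) : ℝ :=
  (∫ y in S, η y ∂μ) / (μ S).toReal

/-- Probability radius `r(x;p)`. -/
noncomputable def probRadius {X : Type*} [MetricSpace X] [MeasurableSpace X]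
    (μ : Measure X) (x : X) (p : ℝ) : ℝ :=
  sInf {r : ℝ | p ≤ (μ (closedBall x r)).toReal}

/-- `(α, L)`-smoothness of the conditional probability function. -/
def SmoothCond {X : Type*} [MetricSpace X] [MeasurableSpace X]
    (μ : Measure X) (η : X → ℝ) (α L : ℝ) : Prop :=
  ∀ x x' : X, |η x - η x'| ≤ L * (μ (ball x (dist x x'))).toReal ^ α

/-- The positive part of the effective interior. -/
def effIntPlus {X : Type*} [MetricSpace X] [MeasurableSpace X]
    (μ : Measure X) (η : X → ℝ) (p Δ : ℝ) : Set X :=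
  {x | 1/2 < η x ∧ ∀ r, 0 < r → r ≤ probRadius μ x p →
    Δ ≤ condMean μ η (closedBall x r) - 1/2}

/-- The negative part of the effective interior. -/
def effIntMinus {X : Type*} [MetricSpace X] [MeasurableSpace X]
    (μ : Measure X) (η : X → ℝ) (p Δ : ℝ) : Set X :=
  {x | η x < 1/2 ∧ ∀ r, 0 < r → r ≤ probRadius μ x p →
    Δ ≤ 1/2 - condMean μ η (closedBall x r)}

/-- The effective decision boundary. -/
def effBoundary {X : Type*} [MetricSpace X] [MeasurableSpace X]
    (μ : Measure X) (η : X → ℝ) (p Δ : ℝ) : Set X :=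
  (effIntPlus μ η p Δ ∪ effIntMinus μ η p Δ)ᶜ

/-- If μ has full support, η is (α,L)-smooth, μ{x}=0, and the local conditional means on all
balls of radius up to the probability radius are at least 1/2 + Δ, then η(x) > 1/2. -/
theorem stmt3 {X : Type*} [MetricSpace X] [MeasurableSpace X] [BorelSpace X]
    (μ : Measure X) [IsProbabilityMeasure μ] [μ.IsOpenPosMeasure]
    (η : X → ℝ) (hmeas : Measurable η) (hrange : ∀ x, η x ∈ Set.Icc (0:ℝ) 1)
    (α L : ℝ) (hα : 0 < α) (hL : 0 < L) (hsmooth : SmoothCond μ η α L)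
    (x : X) (hx : μ {x} = 0) (p : ℝ) (hp : p ∈ Set.Ioo (0:ℝ) 1)
    (Δ : ℝ) (hΔ : 0 < Δ)
    (h : ∀ r, 0 < r → r ≤ probRadius μ x p → Δ ≤ condMean μ η (closedBall x r) - 1/2) :
    1/2 < η x := by
  unfold SmoothCond at hsmooth
  simp only [condMean, probRadius] at h
  set ε : ℝ := min p ((Δ/L) ^ (1/α)) with hε
  have hεpos : 0 < ε := lt_min hp.1 (Real.rpow_pos_of_pos (div_pos hΔ hL) _)
  -- measure of closed balls tends to 0 as r → 0+
  have htend : Filter.Tendsto (fun r => (μ (closedBall x r)).toReal)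
      (nhdsWithin 0 (Set.Ioi 0)) (nhds 0) := by
    have h1 := tendsto_measure_cthickening_of_isClosed (μ := μ) (s := {x})
      ⟨1, one_pos, (measure_ne_top μ _)⟩ isClosed_singleton
    rw [hx] at h1
    have h2 : Filter.Tendsto (fun r => μ (closedBall x r)) (nhdsWithin 0 (Set.Ioi 0)) (nhds 0) := by
      apply (h1.mono_left nhdsWithin_le_nhds).congr'
      filter_upwards [self_mem_nhdsWithin] with r (hr : (0:ℝ) < r)
      exact congrArg μ (cthickening_singleton x hr.le)
    have := (ENNReal.tendsto_toReal (by simp)).comp h2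
    simpa [Function.comp_def] using this
  -- pick a small radius
  have hev : ∀ᶠ r in nhdsWithin 0 (Set.Ioi (0:ℝ)),
      (μ (closedBall x r)).toReal < ε := by
    have := htend.eventually (eventually_lt_nhds hεpos)
    simpa using this
  obtain ⟨r, hrε, hr0⟩ := (hev.and self_mem_nhdsWithin).exists
  set S := closedBall x r with hS
  set t := (μ S).toReal with ht
  have htε : t < ε := hrε
  have ht0 : 0 ≤ t := ENNReal.toReal_nonneg
  -- r is below the probability radius
  have hrle : r ≤ sInf {r : ℝ | p ≤ (μ (closedBall x r)).toReal} := by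
    apply le_csInf
    · -- nonempty
      have hmono : Monotone (fun n : ℕ => closedBall x n) := fun a b hab =>
        closedBall_subset_closedBall (by exact_mod_cast hab)
      have huniv : (⋃ n : ℕ, closedBall x (n : ℝ)) = Set.univ := by
        ext y; simp only [Set.mem_iUnion, Set.mem_univ, iff_true, mem_closedBall]
        obtain ⟨n, hn⟩ := exists_nat_ge (dist y x)
        exact ⟨n, hn⟩
      have := tendsto_measure_iUnion_atTop (μ := μ) hmono
      rw [huniv] at this
      have h2 : Filter.Tendsto (fun n : ℕ => (μ (closedBall x n)).toReal)
          Filter.atTop (nhds 1) := by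
        have := (ENNReal.tendsto_toReal (by simp)).comp this
        simpa [Function.comp_def] using this
      have := (h2.eventually (eventually_gt_nhds hp.2)).exists
      obtain ⟨n, hn⟩ := this
      exact ⟨n, hn.le⟩
    · intro b hb
      by_contra hlt
      push_neg at hlt
      have : (μ (closedBall x b)).toReal ≤ t :=
        ENNReal.toReal_mono (measure_ne_top μ _)
          (measure_mono (closedBall_subset_closedBall hlt.le))
      have : p ≤ t := le_trans hb this
      exact absurd (lt_of_le_of_lt this (lt_of_lt_of_le htε (min_le_left _ _))) (lt_irrefl p)
  have hkey := h r hr0 hrle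
  -- positivity of measure of S
  have hSpos : 0 < t := by
    rw [ht, ENNReal.toReal_pos_iff]
    exact ⟨lt_of_lt_of_le (Metric.measure_ball_pos μ x hr0) (measure_mono ball_subset_closedBall),
      measure_lt_top μ _⟩
  set C := L * t ^ α with hC
  have hCΔ : C < Δ := by
    have h1 : t ^ α < ((Δ/L) ^ (1/α)) ^ α :=
      Real.rpow_lt_rpow ht0 (lt_of_lt_of_le htε (min_le_right _ _)) hα
    rw [← Real.rpow_mul (div_pos hΔ hL).le, one_div_mul_cancel hα.ne', Real.rpow_one] at h1
    calc C = L * t ^ α := rfl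
      _ < L * (Δ / L) := by exact mul_lt_mul_of_pos_left h1 hL
      _ = Δ := by field_simp
  -- pointwise bound on S
  have hpt : ∀ y ∈ S, η y ≤ η x + C := by
    intro y hy
    have h1 := hsmooth x y
    have h2 : (μ (ball x (dist x y))).toReal ≤ t := by
      apply ENNReal.toReal_mono (measure_ne_top μ _)
      exact measure_mono (ball_subset_closedBall.trans
        (closedBall_subset_closedBall (by rw [dist_comm]; exact hy)))
    have h3 : L * (μ (ball x (dist x y))).toReal ^ α ≤ C :=
      mul_le_mul_of_nonneg_left (Real.rpow_le_rpow ENNReal.toReal_nonneg h2 hα.le) hL.le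
    have := abs_le.mp h1
    linarith [this.1]
  -- integral bound
  have hint : (∫ y in S, η y ∂μ) ≤ (η x + C) * t := by
    have hInt : IntegrableOn η S μ := by
      apply Measure.integrableOn_of_bounded (measure_ne_top μ _) hmeas.aestronglyMeasurable (M := 1)
      filter_upwards with y
      rw [Real.norm_eq_abs, abs_le]
      exact ⟨by linarith [(hrange y).1], (hrange y).2⟩
    have := setIntegral_mono_on hInt (integrableOn_const (measure_ne_top μ S))
      measurableSet_closedBall hpt
    rwa [setIntegral_const, smul_eq_mul, mul_comm] at this
  have hcond : (∫ y in S, η y ∂μ) / t ≤ η x + C := by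
    rw [div_le_iff₀ hSpos]
    exact hint
  linarith
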